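/- Main calibration bound (Theorem A.1): Suppose for each input x: (A1) the true correctness probability is P(x) = σ(Δ(x)/κ(x)) for some κ(x) > 0; (A3) there exists λ(x) > 0 such that |ISE_f(x,τ) - ISE_f(x,κ(x))| ≥ λ(x)·|1/τ - 1/κ(x)| for all τ in the relevant range; and Δ(x) is bounded. Define the confidence proxy c_τ(x) = σ(Δ(x)/τ) and the calibration surrogate E_f(τ) = E_x[(c_τ(x) - P(x))²]. Then for every τ > 0, E_f(τ) ≤ E_x[ w(x)·(ISE_f(x,τ) - ISE_g(x))² ] + C_g, where w(x) = Δ(x)²/(16 λ(x)²) and C_g = E_x[ w(x)·(ISE_f(x,κ(x)) - ISE_g(x))² ] ≥ 0 (up to a factor 2 on both terms if the two-term squared inequality with constant 2 is used). -/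

import Mathlib

noncomputable def sigmoid (t : ℝ) : ℝ := 1 / (1 + Real.exp (-t))

lemma sigmoid_hasDerivAt (t : ℝ) :
    HasDerivAt sigmoid (Real.exp (-t) / (1 + Real.exp (-t)) ^ 2) t := by
  have h : HasDerivAt (fun s : ℝ => 1 + Real.exp (-s)) (-Real.exp (-t)) t := by
    simpa using (((Real.hasDerivAt_exp (-t)).comp t (hasDerivAt_neg t)).const_add 1)
  have hne : (1 + Real.exp (-t)) ≠ 0 := by positivity
  have hs : sigmoid = fun y : ℝ => (1 + Real.exp (-y))⁻¹ := by
    funext y; simp [sigmoid, one_div]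
  rw [hs]
  have h3 := h.inv hne
  simp at h3
  exact h3

lemma sigmoid_deriv_bound (t : ℝ) :
    Real.exp (-t) / (1 + Real.exp (-t)) ^ 2 ≤ 1 / 4 := by
  have hu : 0 < Real.exp (-t) := Real.exp_pos _
  rw [div_le_div_iff₀ (by positivity) (by norm_num)]
  nlinarith [sq_nonneg (1 - Real.exp (-t))]

lemma sigmoid_lipschitz (a b : ℝ) : |sigmoid a - sigmoid b| ≤ (1 / 4) * |a - b| := by
  rcases lt_trichotomy a b with h | h | h
  · obtain ⟨c, _, hc⟩ := exists_hasDerivAt_eq_slope sigmoid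
      (fun s => Real.exp (-s) / (1 + Real.exp (-s)) ^ 2) h
      (fun x _ => (sigmoid_hasDerivAt x).continuousAt.continuousWithinAt)
      (fun x _ => sigmoid_hasDerivAt x)
    have hb : |(sigmoid b - sigmoid a) / (b - a)| ≤ 1 / 4 := by
      rw [← hc, abs_of_nonneg (by positivity)]
      exact sigmoid_deriv_bound c
    have hba : 0 < b - a := by linarith
    rw [abs_div, abs_of_pos hba, div_le_iff₀ hba] at hb
    calc |sigmoid a - sigmoid b| = |sigmoid b - sigmoid a| := abs_sub_comm _ _
      _ ≤ 1 / 4 * (b - a) := hb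
      _ = 1 / 4 * |a - b| := by rw [abs_sub_comm, abs_of_pos hba]
  · simp [h]
  · obtain ⟨c, _, hc⟩ := exists_hasDerivAt_eq_slope sigmoid
      (fun s => Real.exp (-s) / (1 + Real.exp (-s)) ^ 2) h
      (fun x _ => (sigmoid_hasDerivAt x).continuousAt.continuousWithinAt)
      (fun x _ => sigmoid_hasDerivAt x)
    have hb : |(sigmoid a - sigmoid b) / (a - b)| ≤ 1 / 4 := by
      rw [← hc, abs_of_nonneg (by positivity)]
      exact sigmoid_deriv_bound c
    have hba : 0 < a - b := by linarith
    rw [abs_div, abs_of_pos hba, div_le_iff₀ hba] at hb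
    calc |sigmoid a - sigmoid b| ≤ 1 / 4 * (a - b) := hb
      _ = 1 / 4 * |a - b| := by rw [abs_of_pos hba]

/-- Main calibration bound (Theorem A.1), with the factor-2 two-term splitting. -/
theorem calibration_bound {ι : Type*} [Fintype ι]
    (μ : ι → ℝ) (hμ0 : ∀ x, 0 ≤ μ x) (hμ1 : ∑ x, μ x = 1)
    (Δ κ lam ISEg : ι → ℝ) (ISEf : ι → ℝ → ℝ) (P : ι → ℝ)
    (hκ : ∀ x, 0 < κ x) (hlam : ∀ x, 0 < lam x)
    (hA1 : ∀ x, P x = sigmoid (Δ x / κ x))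
    (hA3 : ∀ x, ∀ τ : ℝ, 0 < τ →
      lam x * |1 / τ - 1 / κ x| ≤ |ISEf x τ - ISEf x (κ x)|)
    (hbdd : ∃ M : ℝ, ∀ x, |Δ x| ≤ M)
    (w : ι → ℝ) (hw : ∀ x, w x = Δ x ^ 2 / (16 * lam x ^ 2))
    (Cg : ℝ) (hCg : Cg = ∑ x, μ x * (w x * (ISEf x (κ x) - ISEg x) ^ 2)) :
    0 ≤ Cg ∧
      ∀ τ : ℝ, 0 < τ →
        ∑ x, μ x * (sigmoid (Δ x / τ) - P x) ^ 2 ≤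
          ∑ x, μ x * (2 * w x * (ISEf x τ - ISEg x) ^ 2) + 2 * Cg := by
  have hw0 : ∀ x, 0 ≤ w x := fun x => by rw [hw x]; positivity
  constructor
  · rw [hCg]
    apply Finset.sum_nonneg
    intro x _
    have := hw0 x
    have := hμ0 x
    positivity
  · intro τ hτ
    have key : ∀ x, μ x * (sigmoid (Δ x / τ) - P x) ^ 2 ≤
        μ x * (2 * w x * (ISEf x τ - ISEg x) ^ 2) +
        2 * (μ x * (w x * (ISEf x (κ x) - ISEg x) ^ 2)) := by
      intro x
      have h1 : |sigmoid (Δ x / τ) - sigmoid (Δ x / κ x)| ≤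
          (1 / 4) * (|Δ x| * |1 / τ - 1 / κ x|) := by
        have := sigmoid_lipschitz (Δ x / τ) (Δ x / κ x)
        have heq : |Δ x / τ - Δ x / κ x| = |Δ x| * |1 / τ - 1 / κ x| := by
          rw [← abs_mul]; ring_nf
        rw [heq] at this
        exact this
      have h2 := hA3 x τ hτ
      set A := ISEf x τ - ISEg x
      set B := ISEf x (κ x) - ISEg x
      have hAB : ISEf x τ - ISEf x (κ x) = A - B := by ring
      rw [hAB] at h2
      set d := |1 / τ - 1 / κ x| with hd
      have hd0 : 0 ≤ d := abs_nonneg _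
      -- square h1
      have hsq1 : (sigmoid (Δ x / τ) - sigmoid (Δ x / κ x)) ^ 2 ≤
          Δ x ^ 2 * d ^ 2 / 16 := by
        have h1' := mul_self_le_mul_self (abs_nonneg _) h1
        rw [← sq_abs (sigmoid (Δ x / τ) - sigmoid (Δ x / κ x)), sq] at *
        nlinarith [sq_abs (Δ x), abs_nonneg (Δ x)]
      -- square h2
      have hsq2 : lam x ^ 2 * d ^ 2 ≤ (A - B) ^ 2 := by
        have h2' := mul_self_le_mul_self (mul_nonneg (hlam x).le hd0) h2
        rw [← sq_abs (A - B)]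
        nlinarith
      have hwl : w x * lam x ^ 2 = Δ x ^ 2 / 16 := by
        have hl : lam x ^ 2 ≠ 0 := pow_ne_zero 2 (hlam x).ne'
        rw [hw x]; rw [div_mul_eq_mul_div, div_eq_iff (mul_ne_zero (by norm_num) hl)]; ring
      have hABsq : (A - B) ^ 2 ≤ 2 * A ^ 2 + 2 * B ^ 2 := by nlinarith [sq_nonneg (A + B)]
      have hpoint : (sigmoid (Δ x / τ) - sigmoid (Δ x / κ x)) ^ 2 ≤
          2 * w x * A ^ 2 + 2 * (w x * B ^ 2) := by
        have hwd : w x * (lam x ^ 2 * d ^ 2) ≤ w x * (A - B) ^ 2 :=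
          mul_le_mul_of_nonneg_left hsq2 (hw0 x)
        have hwd2 : w x * (A - B) ^ 2 ≤ w x * (2 * A ^ 2 + 2 * B ^ 2) :=
          mul_le_mul_of_nonneg_left hABsq (hw0 x)
        have heq : w x * (lam x ^ 2 * d ^ 2) = Δ x ^ 2 * d ^ 2 / 16 := by
          rw [← mul_assoc, hwl]; ring
        calc (sigmoid (Δ x / τ) - sigmoid (Δ x / κ x)) ^ 2
            ≤ Δ x ^ 2 * d ^ 2 / 16 := hsq1
          _ = w x * (lam x ^ 2 * d ^ 2) := heq.symm
          _ ≤ w x * (A - B) ^ 2 := hwd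
          _ ≤ w x * (2 * A ^ 2 + 2 * B ^ 2) := hwd2
          _ = 2 * w x * A ^ 2 + 2 * (w x * B ^ 2) := by ring
      rw [hA1 x]
      calc μ x * (sigmoid (Δ x / τ) - sigmoid (Δ x / κ x)) ^ 2
          ≤ μ x * (2 * w x * A ^ 2 + 2 * (w x * B ^ 2)) :=
            mul_le_mul_of_nonneg_left hpoint (hμ0 x)
        _ = μ x * (2 * w x * A ^ 2) + 2 * (μ x * (w x * B ^ 2)) := by ring
    calc ∑ x, μ x * (sigmoid (Δ x / τ) - P x) ^ 2
        ≤ ∑ x, (μ x * (2 * w x * (ISEf x τ - ISEg x) ^ 2) +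
            2 * (μ x * (w x * (ISEf x (κ x) - ISEg x) ^ 2))) :=
          Finset.sum_le_sum fun x _ => key x
      _ = ∑ x, μ x * (2 * w x * (ISEf x τ - ISEg x) ^ 2) + 2 * Cg := by
          rw [Finset.sum_add_distrib, hCg, ← Finset.mul_sum]
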